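/- arXiv:2209.13024 — 3 statements merged into one kernel-verified Lean document; each statement's English description precedes it below -/
import Mathlib

section
/- Consider the annulus between two concentric circles of radii 26/27 and 1 centered at the origin. Inscribe a regular 13-gon in the outer circle and partition the annulus into 13 congruent zones by the segments from the center to the vertices of the 13-gon. Then any two points lying in the same zone are at distance at most 13/27 from each other; in particular, a disk of radius 13/27 centered at any point of a zone covers the entire zone. -/
open Real

lemma sin_pi13_le : Real.sin (π / 13) ≤ 0.2395 := by
  have hπu : π < 3.141593 := Real.pi_lt_d6
  have hπl : 3.141592 < π := Real.pi_gt_d6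
  set x : ℝ := π / 13 with hx
  have hx0 : (0.24166 : ℝ) < x := by rw [hx]; linarith
  have hx1 : x < 0.2416611 := by rw [hx]; linarith
  have hxabs : |x| ≤ 1 := by rw [abs_of_pos (by linarith)]; linarith
  have hb := Real.sin_bound hxabs
  rw [abs_of_pos (show (0:ℝ) < x by linarith)] at hb
  have hb' : Real.sin x ≤ x - x ^ 3 / 6 + x ^ 4 * (5 / 96) := by
    have := abs_le.mp hb
    nlinarith [this.2, pow_pos (show (0:ℝ) < x by linarith) 4]
  nlinarith [sq_nonneg x, sq_nonneg (x - 0.24166), pow_pos (show (0:ℝ) < x by linarith) 3,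
    pow_pos (show (0:ℝ) < x by linarith) 4]

lemma cos_2pi13_ge : (0.88525 : ℝ) ≤ Real.cos (2 * π / 13) := by
  have h2 : 2 * π / 13 = 2 * (π / 13) := by ring
  rw [h2, Real.cos_two_mul]
  have hs := sin_pi13_le
  have hsnn : 0 ≤ Real.sin (π / 13) := by
    apply Real.sin_nonneg_of_nonneg_of_le_pi
    · positivity
    · have := Real.pi_pos; linarith
  have hpc := Real.sin_sq_add_cos_sq (π / 13)
  nlinarith

/-- Any two points of a zone of the annulus (inner radius 26/27, outer radius 1,
angular width 2π/13) are within distance 13/27; in particular a disk of radius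
13/27 centered at any point of the zone covers the whole zone. -/
theorem stmt_0 (θ₀ : ℝ) (Z : Set (EuclideanSpace ℝ (Fin 2)))
    (hZ : Z = {p | ∃ r θ : ℝ, 26/27 ≤ r ∧ r ≤ 1 ∧ θ₀ ≤ θ ∧ θ ≤ θ₀ + 2*π/13 ∧
      p = (!₂[r * Real.cos θ, r * Real.sin θ] : EuclideanSpace ℝ (Fin 2))}) :
    (∀ p ∈ Z, ∀ q ∈ Z, dist p q ≤ 13/27) ∧
    (∀ p ∈ Z, Z ⊆ Metric.closedBall p (13/27)) := by
  subst hZ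
  have main : ∀ p ∈ {p : EuclideanSpace ℝ (Fin 2) | ∃ r θ : ℝ, 26/27 ≤ r ∧ r ≤ 1 ∧ θ₀ ≤ θ ∧ θ ≤ θ₀ + 2*π/13 ∧
      p = (!₂[r * Real.cos θ, r * Real.sin θ] : EuclideanSpace ℝ (Fin 2))},
      ∀ q ∈ {p : EuclideanSpace ℝ (Fin 2) | ∃ r θ : ℝ, 26/27 ≤ r ∧ r ≤ 1 ∧ θ₀ ≤ θ ∧ θ ≤ θ₀ + 2*π/13 ∧
      p = (!₂[r * Real.cos θ, r * Real.sin θ] : EuclideanSpace ℝ (Fin 2))},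
      dist p q ≤ 13/27 := by
    rintro p ⟨r, θ, hr1, hr2, hθ1, hθ2, rfl⟩ q ⟨s, φ, hs1, hs2, hφ1, hφ2, rfl⟩
    have hπ := Real.pi_pos
    -- angle difference bound
    have hΔ : |θ - φ| ≤ 2 * π / 13 := by
      rw [abs_le]; constructor <;> linarith
    have hcosΔ : Real.cos (2 * π / 13) ≤ Real.cos (θ - φ) := by
      rw [← Real.cos_abs (θ - φ)]
      apply Real.cos_le_cos_of_nonneg_of_le_pi (abs_nonneg _) (by linarith) hΔ
    have hc : (0.88525 : ℝ) ≤ Real.cos (θ - φ) := le_trans cos_2pi13_ge hcosΔ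
    have hc1 : Real.cos (θ - φ) ≤ 1 := Real.cos_le_one _
    -- key algebraic bound
    have key : (r * Real.cos θ - s * Real.cos φ) ^ 2 + (r * Real.sin θ - s * Real.sin φ) ^ 2
        ≤ (13/27) ^ 2 := by
      have hexp : (r * Real.cos θ - s * Real.cos φ) ^ 2 + (r * Real.sin θ - s * Real.sin φ) ^ 2
          = r ^ 2 + s ^ 2 - 2 * r * s * Real.cos (θ - φ) := by
        rw [Real.cos_sub]
        have h1 := Real.sin_sq_add_cos_sq θ
        have h2 := Real.sin_sq_add_cos_sq φ
        nlinarith [h1, h2]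
      rw [hexp]
      nlinarith [mul_nonneg (sub_nonneg.mpr hr2) (sub_nonneg.mpr hs2),
        mul_nonneg (sub_nonneg.mpr hr1) (sub_nonneg.mpr hs1),
        mul_nonneg (sub_nonneg.mpr hr2) (sub_nonneg.mpr hs1),
        mul_nonneg (sub_nonneg.mpr hr1) (sub_nonneg.mpr hs2),
        sq_nonneg (r - s), mul_pos (show (0:ℝ) < r by linarith) (show (0:ℝ) < s by linarith)]
    rw [EuclideanSpace.dist_eq]
    have hsum : ∑ i : Fin 2, dist ((!₂[r * Real.cos θ, r * Real.sin θ] : EuclideanSpace ℝ (Fin 2)) i)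
        ((!₂[s * Real.cos φ, s * Real.sin φ] : EuclideanSpace ℝ (Fin 2)) i) ^ 2
        = (r * Real.cos θ - s * Real.cos φ) ^ 2 + (r * Real.sin θ - s * Real.sin φ) ^ 2 := by
      simp [Fin.sum_univ_two, Real.dist_eq, sq_abs]
    rw [hsum]
    calc Real.sqrt ((r * Real.cos θ - s * Real.cos φ) ^ 2 + (r * Real.sin θ - s * Real.sin φ) ^ 2)
        ≤ Real.sqrt ((13/27) ^ 2) := Real.sqrt_le_sqrt key
      _ = 13/27 := Real.sqrt_sq (by norm_num)
  exact ⟨main, fun p hp q hq => Metric.mem_closedBall.mpr (main q hq p hp)⟩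
end

section
/- Let P be a finite set of points in ℝ², each point p assigned a positive rate r_p, and let h = max over pairs p,q of r_p/r_q. Let δ ≥ 1 be an integer and suppose E ⊆ P is a dominating set of the disk graph G_{δ−1} whose disks have radius ((δ−1)/2)·r_p for each p ∈ P. If every point of E is ignited by step |E| and the process continues for h·(δ−1) further steps (the fire from a point q spreading at rate r_q per step), then every point of P is burned within |E| + h·(δ−1) steps. In particular, for any p ∉ E dominated by q ∈ E, the distance ‖p − q‖ ≤ ((δ−1)/2)(r_p + r_q) ≤ r_q·h·(δ−1). -/
/-- Point burning with non-uniform rates: if E is a dominating set of the disk graph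
G_{δ−1}, every point of E is ignited by step |E|, and the process runs for h·(δ−1)
further steps, then every point of P is burned within |E| + h·(δ−1) steps. -/
theorem stmt_7 (P : Finset (EuclideanSpace ℝ (Fin 2)))
    (r : EuclideanSpace ℝ (Fin 2) → ℝ) (hr : ∀ p ∈ P, 0 < r p)
    (h : ℝ) (hh : ∀ p ∈ P, ∀ q ∈ P, r p ≤ h * r q)
    (δ : ℕ) (hδ : 1 ≤ δ)
    (E : Finset (EuclideanSpace ℝ (Fin 2))) (hEP : E ⊆ P)
    (hdom : ∀ p ∈ P, p ∈ E ∨ ∃ q ∈ E,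
      dist p q ≤ (((δ : ℝ) - 1) / 2) * (r p + r q))
    (s : EuclideanSpace ℝ (Fin 2) → ℕ) (hs : ∀ q ∈ E, (s q : ℝ) ≤ (E.card : ℝ)) :
    (∀ p ∈ P, ∃ q ∈ E,
      dist p q ≤ r q * (((E.card : ℝ) + h * ((δ : ℝ) - 1)) - (s q : ℝ))) ∧
    (∀ p ∈ P, p ∉ E → ∀ q ∈ E,
      dist p q ≤ (((δ : ℝ) - 1) / 2) * (r p + r q) →
      dist p q ≤ r q * h * ((δ : ℝ) - 1)) := by
  have hδ1 : (0:ℝ) ≤ (δ:ℝ) - 1 := by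
    have : (1:ℝ) ≤ (δ:ℝ) := by exact_mod_cast hδ
    linarith
  have key : ∀ p ∈ P, ∀ q ∈ E,
      dist p q ≤ (((δ : ℝ) - 1) / 2) * (r p + r q) →
      dist p q ≤ r q * h * ((δ : ℝ) - 1) := by
    intro p hp q hq hd
    have hqP := hEP hq
    have h1 : r p ≤ h * r q := hh p hp q hqP
    have h2 : r q ≤ h * r q := hh q hqP q hqP
    calc dist p q ≤ (((δ : ℝ) - 1) / 2) * (r p + r q) := hd
      _ ≤ (((δ : ℝ) - 1) / 2) * (h * r q + h * r q) := by nlinarith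
      _ = r q * h * ((δ : ℝ) - 1) := by ring
  have hge1 : ∀ p ∈ P, (1:ℝ) ≤ h := fun p hp =>
    le_of_mul_le_mul_right (by simpa [one_mul] using hh p hp p hp) (hr p hp)
  refine ⟨fun p hp => ?_, fun p hp _ q hq hd => key p hp q hq hd⟩
  have hhp := hge1 p hp
  rcases hdom p hp with hpE | ⟨q, hq, hd⟩
  · refine ⟨p, hpE, ?_⟩
    have hsp := hs p hpE
    have := hr p hp
    have : (0:ℝ) ≤ h * ((δ:ℝ) - 1) := by nlinarith
    simp only [dist_self]
    nlinarith [hr p hp]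
  · refine ⟨q, hq, ?_⟩
    have hk := key p hp q hq hd
    have hsq := hs q hq
    have hrq := hr q (hEP hq)
    nlinarith
end

section
/- Any independent pair of intersecting 3-clauses in an LSAT instance involves exactly 5 distinct literals; hence an LSAT instance over n variables (where both literals of each variable occur) contains at most 2n/5 heavy intersection literals. -/
section aux
variable {α : Type*} [DecidableEq α] {clauses : Finset (Finset α)}

/-- If two heavy pairs share their "first" clause, their intersection literals coincide. -/
lemma lsat_pair_eq
    (hone : ∀ C ∈ clauses, ∀ D ∈ clauses, ∀ E ∈ clauses,
      C ≠ D → C ≠ E → (C ∩ D).Nonempty → (C ∩ E).Nonempty → D = E)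
    {C D D' : Finset α} (hC : C ∈ clauses) (hD : D ∈ clauses) (hD' : D' ∈ clauses)
    (hCD : C ≠ D) (hCD' : C ≠ D') {ℓ ℓ' : α}
    (h1 : C ∩ D = {ℓ}) (h2 : C ∩ D' = {ℓ'}) : ℓ = ℓ' := by
  have hDD' : D = D' := hone C hC D hD D' hD' hCD hCD'
    ⟨ℓ, by simp [h1]⟩ ⟨ℓ', by simp [h2]⟩
  have : ({ℓ} : Finset α) = {ℓ'} := by rw [← h1, ← h2, hDD']
  simpa using this

/-- If two heavy pairs share any clause, their intersection literals coincide. -/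
lemma lsat_shared
    (hone : ∀ C ∈ clauses, ∀ D ∈ clauses, ∀ E ∈ clauses,
      C ≠ D → C ≠ E → (C ∩ D).Nonempty → (C ∩ E).Nonempty → D = E)
    {C D C' D' : Finset α} (hC : C ∈ clauses) (hD : D ∈ clauses)
    (hC' : C' ∈ clauses) (hD' : D' ∈ clauses)
    (hCD : C ≠ D) (hCD' : C' ≠ D') {ℓ ℓ' : α}
    (h1 : C ∩ D = {ℓ}) (h2 : C' ∩ D' = {ℓ'})
    (hsh : C = C' ∨ C = D' ∨ D = C' ∨ D = D') : ℓ = ℓ' := by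
  rcases hsh with h | h | h | h
  · subst h
    exact lsat_pair_eq hone hC hD hD' hCD hCD' h1 h2
  · subst h
    have hne : C ≠ C' := fun hh => hCD' (hh ▸ rfl)
    exact lsat_pair_eq hone hC hD hC' hCD hne h1 (by rw [Finset.inter_comm] at h2; exact h2)
  · subst h
    have hne : D ≠ D' := fun hh => hCD' (hh ▸ rfl)
    exact lsat_pair_eq hone hD hC hD' (Ne.symm hCD) hne
      (by rw [Finset.inter_comm] at h1; exact h1) h2
  · subst h
    have hne : D ≠ C' := Ne.symm hCD'
    exact lsat_pair_eq hone hD hC hC' (Ne.symm hCD) hne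
      (by rw [Finset.inter_comm] at h1; exact h1) (by rw [Finset.inter_comm] at h2; exact h2)

/-- Distinct heavy literals give disjoint 5-literal sets. -/
lemma lsat_disjoint
    (hone : ∀ C ∈ clauses, ∀ D ∈ clauses, ∀ E ∈ clauses,
      C ≠ D → C ≠ E → (C ∩ D).Nonempty → (C ∩ E).Nonempty → D = E)
    {C D C' D' : Finset α} (hC : C ∈ clauses) (hD : D ∈ clauses)
    (hC' : C' ∈ clauses) (hD' : D' ∈ clauses)
    (hCD : C ≠ D) (hCD' : C' ≠ D') {ℓ ℓ' : α}
    (h1 : C ∩ D = {ℓ}) (h2 : C' ∩ D' = {ℓ'}) (hne : ℓ ≠ ℓ') :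
    Disjoint (C ∪ D) (C' ∪ D') := by
  rw [Finset.disjoint_left]
  intro x hx hx'
  -- select clauses containing x on each side
  have cross : ∀ E F : Finset α, E ∈ clauses → F ∈ clauses →
      (E = C ∨ E = D) → (F = C' ∨ F = D') → x ∈ E → x ∈ F → False := by
    intro E F hE hF hEcd hFcd hxE hxF
    have hshared : ∀ G : Finset α, (G = C ∨ G = D) → (G = C' ∨ G = D') → False := by
      intro G hG hG'
      apply hne
      refine lsat_shared hone hC hD hC' hD' hCD hCD' h1 h2 ?_
      rcases hG with rfl | rfl <;> rcases hG' with h | h <;> tauto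
    by_cases hEF : E = F
    · exact hshared F (hEF ▸ hEcd) hFcd
    · -- partner of E
      rcases hEcd with rfl | rfl
      · have hFeq : F = D := hone E hE F hF D hD hEF hCD ⟨x, by simp [hxE, hxF]⟩
          ⟨ℓ, by simp [h1]⟩
        exact hshared F (Or.inr hFeq) hFcd
      · have hFeq : F = C := hone E hE F hF C hC hEF (Ne.symm hCD)
          ⟨x, by simp [hxE, hxF]⟩ ⟨ℓ, by rw [Finset.inter_comm] at h1; simp [h1]⟩
        exact hshared F (Or.inl hFeq) hFcd
  rcases Finset.mem_union.mp hx with hxE | hxE <;>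
    rcases Finset.mem_union.mp hx' with hxF | hxF
  · exact cross C C' hC hC' (Or.inl rfl) (Or.inl rfl) hxE hxF
  · exact cross C D' hC hD' (Or.inl rfl) (Or.inr rfl) hxE hxF
  · exact cross D C' hD hC' (Or.inr rfl) (Or.inl rfl) hxE hxF
  · exact cross D D' hD hD' (Or.inr rfl) (Or.inr rfl) hxE hxF

end aux

/-- In an LSAT instance over n variables (2n literals), a pair of intersecting
3-clauses involves exactly 5 distinct literals; hence there are at most 2n/5 heavy
intersection literals. -/
theorem stmt_16 (n : ℕ) (clauses : Finset (Finset (Fin (2 * n))))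
    (hsize : ∀ C ∈ clauses, C.Nonempty ∧ C.card ≤ 3)
    (hshare : ∀ C ∈ clauses, ∀ D ∈ clauses, C ≠ D → (C ∩ D).card ≤ 1)
    (hone : ∀ C ∈ clauses, ∀ D ∈ clauses, ∀ E ∈ clauses,
      C ≠ D → C ≠ E → (C ∩ D).Nonempty → (C ∩ E).Nonempty → D = E) :
    (∀ C ∈ clauses, ∀ D ∈ clauses, C ≠ D → C.card = 3 → D.card = 3 →
      (C ∩ D).card = 1 → (C ∪ D).card = 5) ∧
    ({ℓ : Fin (2 * n) | ∃ C ∈ clauses, ∃ D ∈ clauses,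
        C ≠ D ∧ C.card = 3 ∧ D.card = 3 ∧ C ∩ D = {ℓ}}.ncard) * 5 ≤ 2 * n := by
  classical
  have key : ∀ C ∈ clauses, ∀ D ∈ clauses, C ≠ D → C.card = 3 → D.card = 3 →
      (C ∩ D).card = 1 → (C ∪ D).card = 5 := by
    intro C _ D _ _ h3 h3' h1
    have := Finset.card_union_add_card_inter C D
    omega
  refine ⟨key, ?_⟩
  set P : Fin (2 * n) → Prop := fun ℓ => ∃ C ∈ clauses, ∃ D ∈ clauses,
    C ≠ D ∧ C.card = 3 ∧ D.card = 3 ∧ C ∩ D = {ℓ} with hP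
  set T : Finset (Fin (2 * n)) := Finset.univ.filter P with hT
  have hset : {ℓ : Fin (2 * n) | ∃ C ∈ clauses, ∃ D ∈ clauses,
      C ≠ D ∧ C.card = 3 ∧ D.card = 3 ∧ C ∩ D = {ℓ}} = ↑T := by
    ext ℓ; simp [hT, hP]
  rw [hset, Set.ncard_coe_finset]
  have hch : ∀ ℓ : Fin (2 * n), ∃ C D : Finset (Fin (2 * n)), ℓ ∈ T →
      C ∈ clauses ∧ D ∈ clauses ∧ C ≠ D ∧ C.card = 3 ∧ D.card = 3 ∧ C ∩ D = {ℓ} := by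
    intro ℓ
    by_cases h : ℓ ∈ T
    · obtain ⟨C, hC, D, hD, h1, h2, h3, h4⟩ := (Finset.mem_filter.mp h).2
      exact ⟨C, D, fun _ => ⟨hC, hD, h1, h2, h3, h4⟩⟩
    · exact ⟨∅, ∅, fun hh => absurd hh h⟩
  choose Cf Df hf using hch
  set U : Fin (2 * n) → Finset (Fin (2 * n)) := fun ℓ => Cf ℓ ∪ Df ℓ with hU
  have hcard : ∀ ℓ ∈ T, (U ℓ).card = 5 := by
    intro ℓ hℓ
    obtain ⟨hC, hD, h1, h2, h3, h4⟩ := hf ℓ hℓ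
    exact key _ hC _ hD h1 h2 h3 (by rw [h4]; simp)
  have hdisj : ∀ ℓ ∈ T, ∀ ℓ' ∈ T, ℓ ≠ ℓ' → Disjoint (U ℓ) (U ℓ') := by
    intro ℓ hℓ ℓ' hℓ' hne
    obtain ⟨hC, hD, h1, _, _, h4⟩ := hf ℓ hℓ
    obtain ⟨hC', hD', h1', _, _, h4'⟩ := hf ℓ' hℓ'
    exact lsat_disjoint hone hC hD hC' hD' h1 h1' h4 h4' hne
  calc T.card * 5 = ∑ ℓ ∈ T, (U ℓ).card := by
        rw [Finset.sum_congr rfl hcard, Finset.sum_const, smul_eq_mul]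
    _ = (T.biUnion U).card := (Finset.card_biUnion hdisj).symm
    _ ≤ (Finset.univ : Finset (Fin (2 * n))).card := Finset.card_le_univ _
    _ = 2 * n := by simp
end
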